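/- arXiv:1812.09035 — 2 statements merged into one kernel-verified Lean document; each statement's English description precedes it below -/
import Mathlib

section
/- Suppose a group G has the unique root property, and let g, h ∈ G. If gᵐ and hⁿ commute for some nonzero integers m and n, then g and h commute. -/
/-- A group has the unique root property if `x^n = y^n` implies `x = y`
for every positive integer `n`. -/
def UniqueRootProperty (G : Type*) [Group G] : Prop :=
  ∀ (n : ℕ), 0 < n → ∀ x y : G, x ^ n = y ^ n → x = y

lemma urp_zpow {G : Type*} [Group G] (hG : UniqueRootProperty G)
    {x y : G} {m : ℤ} (hm : m ≠ 0) (h : x ^ m = y ^ m) : x = y := by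
  rcases lt_or_gt_of_ne hm with h' | h'
  · have h2 : x ^ (-m) = y ^ (-m) := by rw [zpow_neg, zpow_neg, h]
    have hk : ((-m).toNat : ℤ) = -m := Int.toNat_of_nonneg (by omega)
    apply hG (-m).toNat (by omega)
    rw [← zpow_natCast, ← zpow_natCast, hk, h2]
  · have hk : (m.toNat : ℤ) = m := Int.toNat_of_nonneg (by omega)
    apply hG m.toNat (by omega)
    rw [← zpow_natCast, ← zpow_natCast, hk, h]

lemma urp_commute {G : Type*} [Group G] (hG : UniqueRootProperty G)
    {g h : G} {m : ℤ} (hm : m ≠ 0) (hc : Commute (g ^ m) h) : Commute g h := by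
  have key : (h * g * h⁻¹) ^ m = g ^ m := by
    rw [conj_zpow]
    have := hc.eq
    group
    rw [← this]
    group
  have := urp_zpow hG hm key
  have : h * g = g * h := by
    have := congrArg (· * h) this
    simpa [mul_assoc] using this
  exact this.symm

/-- In a group with the unique root property, if `g^m` and `h^n` commute for some
nonzero integers `m`, `n`, then `g` and `h` commute. -/
theorem stmt_6 {G : Type*} [Group G] (hG : UniqueRootProperty G)
    (g h : G) (m n : ℤ) (hm : m ≠ 0) (hn : n ≠ 0)
    (hcomm : Commute (g ^ m) (h ^ n)) : Commute g h := by
  have h1 : Commute g (h ^ n) := urp_commute hG hm hcomm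
  exact (urp_commute hG hn h1.symm).symm
end

section
/- In the Baumslag–Solitar group BS(1,n) = ⟨a, t | tat⁻¹ = aⁿ⟩ with n > 1, the cyclic subgroup H = ⟨a⟩ does not satisfy Condition (C): the cyclic subgroup generated by t lies in Comm_G(H) but does not normalize any finite index subgroup of H. -/
/-- The Baumslag–Solitar group `BS(1,n) = ⟨a, t ∣ t a t⁻¹ = aⁿ⟩`, presented on two
generators `a = of false` and `t = of true`. -/
def BS (n : ℕ) : Type :=
  PresentedGroup
    ({FreeGroup.of true * FreeGroup.of false * (FreeGroup.of true)⁻¹ *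
        (FreeGroup.of false ^ n)⁻¹} : Set (FreeGroup Bool))

instance (n : ℕ) : Group (BS n) := by unfold BS; infer_instance

/-- The generator `a` of `BS(1,n)`. -/
def BS.a (n : ℕ) : BS n := PresentedGroup.of false

/-- The generator `t` of `BS(1,n)`. -/
def BS.t (n : ℕ) : BS n := PresentedGroup.of true


open Pointwise


noncomputable def myalpha : Equiv.Perm ℚ := Equiv.addLeft 1

lemma myalpha_pow (m : ℕ) : ∀ x : ℚ, ((myalpha ^ m) x) = m + x := by
  induction m with
  | zero => intro x; simp [myalpha]
  | succ k ih =>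
      intro x
      rw [pow_succ, Equiv.Perm.mul_apply, ih]
      simp [myalpha]
      ring

lemma orderOf_myalpha : orderOf myalpha = 0 := by
  rw [orderOf_eq_zero_iff']
  intro m hm h
  have := congrArg (fun e : Equiv.Perm ℚ => e 0) h
  simp [myalpha_pow] at this
  omega

lemma relindex_zpowers_pow {G : Type*} [Group G] (g : G) {m : ℕ} (hm : 0 < m) :
    (Subgroup.zpowers (g ^ m)).relIndex (Subgroup.zpowers g) ≠ 0 := by
  open Subgroup in
  have hfin : Finite ((zpowers g : Subgroup G) ⧸ (zpowers (g ^ m)).subgroupOf (zpowers g)) := by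
    apply Finite.of_surjective
      (f := fun r : Fin m =>
        (QuotientGroup.mk ⟨g ^ (r : ℕ), pow_mem (mem_zpowers g) r⟩ :
          (zpowers g : Subgroup G) ⧸ (zpowers (g ^ m)).subgroupOf (zpowers g)))
    intro x
    induction x using QuotientGroup.induction_on with
    | H y =>
      obtain ⟨y, hy⟩ := y
      obtain ⟨k, hk⟩ := mem_zpowers_iff.mp hy
      have hm' : (0:ℤ) < m := by exact_mod_cast hm
      refine ⟨⟨(k % m).toNat, ?_⟩, ?_⟩
      · have h1 : 0 ≤ k % m := Int.emod_nonneg k (by omega)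
        have h2 : k % m < m := Int.emod_lt_of_pos k hm'
        omega
      · rw [QuotientGroup.eq]
        rw [mem_subgroupOf]
        have h1 : 0 ≤ k % m := Int.emod_nonneg k (by omega)
        show ((g ^ (((k % m).toNat : ℕ)))⁻¹ * y) ∈ zpowers (g ^ m)
        have : (g ^ (((k % m).toNat : ℕ)))⁻¹ * y = (g ^ m) ^ (k / m) := by
          rw [← hk, ← zpow_natCast g ((k % m).toNat), Int.toNat_of_nonneg h1,
            ← zpow_neg, ← zpow_natCast g m, ← zpow_mul, ← zpow_add]
          congr 1
          have := Int.mul_ediv_add_emod k m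
          omega
        rw [this]
        exact zpow_mem (mem_zpowers _) _
  exact Subgroup.index_ne_zero_of_finite

lemma BS.relation (n : ℕ) : BS.t n * BS.a n * (BS.t n)⁻¹ = (BS.a n) ^ n := by
  have h : ((QuotientGroup.mk (FreeGroup.of true * FreeGroup.of false * (FreeGroup.of true)⁻¹ *
        (FreeGroup.of false ^ n)⁻¹) : BS n)) = 1 := by
    rw [QuotientGroup.eq_one_iff]
    exact Subgroup.subset_normalClosure rfl
  have h2 : (QuotientGroup.mk' _ (FreeGroup.of true * FreeGroup.of false * (FreeGroup.of true)⁻¹ *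
        (FreeGroup.of false ^ n)⁻¹) : BS n) = 1 := h
  rw [map_mul, map_mul, map_mul, map_inv, map_inv, map_pow] at h2
  have h3 : BS.t n * BS.a n * (BS.t n)⁻¹ * ((BS.a n) ^ n)⁻¹ = 1 := h2
  rw [mul_inv_eq_one] at h3
  exact h3

noncomputable def BS.rep (n : ℕ) (hn : (n : ℚ) ≠ 0) : BS n →* Equiv.Perm ℚ :=
  PresentedGroup.toGroup (f := fun b => if b then Equiv.mulLeft₀ (n : ℚ) hn else myalpha)
    (by
      intro r hr
      rw [Set.mem_singleton_iff] at hr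
      subst hr
      simp only [map_mul, map_inv, map_pow, FreeGroup.lift_apply_of, if_true, if_false, Bool.false_eq_true, ↓reduceIte]
      rw [mul_inv_eq_one]
      ext x
      simp only [Equiv.Perm.mul_apply, Equiv.Perm.inv_def, Equiv.mulLeft₀_symm_apply,
        Equiv.mulLeft₀_apply, myalpha_pow, myalpha, Equiv.coe_addLeft]
      field_simp
      exact (myalpha_pow n x).symm)

lemma BS.rep_a (n : ℕ) (hn : (n : ℚ) ≠ 0) : BS.rep n hn (BS.a n) = myalpha :=
  PresentedGroup.toGroup.of _

lemma BS.orderOf_a (n : ℕ) (hn : (n : ℚ) ≠ 0) : orderOf (BS.a n) = 0 := by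
  have h := orderOf_map_dvd (BS.rep n hn) (BS.a n)
  rw [BS.rep_a, orderOf_myalpha] at h
  exact Nat.eq_zero_of_zero_dvd h

lemma BS.a_zpow_inj (n : ℕ) (hn : (n : ℚ) ≠ 0) {j k : ℤ}
    (h : (BS.a n) ^ j = (BS.a n) ^ k) : j = k := by
  have h2 : (BS.a n) ^ (j - k) = 1 := by
    rw [zpow_sub, h, mul_inv_cancel]
  rw [zpow_eq_one_iff_modEq, BS.orderOf_a n hn] at h2
  simp [Int.ModEq] at h2
  omega

/-- In `BS(1,n)` with `n > 1`, the cyclic subgroup `H = ⟨a⟩` does not satisfy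
Condition (C): the cyclic subgroup `⟨t⟩` lies in `Comm_G(H)`, but it does not
normalize any finite index subgroup of `H`. -/
theorem stmt_8 (n : ℕ) (hn : 1 < n) :
    Subgroup.closure {BS.t n} ≤ Subgroup.Commensurable.commensurator (Subgroup.closure {BS.a n}) ∧
    ∀ H' : Subgroup (BS n), H' ≤ Subgroup.closure {BS.a n} →
      H'.relIndex (Subgroup.closure {BS.a n}) ≠ 0 →
      ¬ (∀ k ∈ Subgroup.closure {BS.t n},
          Subgroup.map (MulAut.conj k).toMonoidHom H' = H') := by
  classical
  have hnQ : (n : ℚ) ≠ 0 := Nat.cast_ne_zero.mpr (by omega)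
  set a := BS.a n with ha
  set t := BS.t n with ht
  have hrel : t * a * t⁻¹ = a ^ n := BS.relation n
  have hca : Subgroup.closure {a} = Subgroup.zpowers a := (Subgroup.zpowers_eq_closure a).symm
  have key : ∀ k : ℤ, t * a ^ k * t⁻¹ = a ^ ((n : ℤ) * k) := by
    intro k
    rw [← conj_zpow, hrel, ← zpow_natCast a n, ← zpow_mul]
  constructor
  · rw [Subgroup.closure_le]
    intro x hx
    rw [Set.mem_singleton_iff] at hx
    subst hx
    rw [SetLike.mem_coe, Subgroup.Commensurable.commensurator_mem_iff]
    have hsmul : ConjAct.toConjAct t • Subgroup.closure {a} = Subgroup.zpowers (a ^ n) := by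
      ext x
      rw [Subgroup.mem_pointwise_smul_iff_inv_smul_mem, hca, ConjAct.smul_def,
        ConjAct.ofConjAct_inv, ConjAct.ofConjAct_toConjAct, inv_inv,
        Subgroup.mem_zpowers_iff, Subgroup.mem_zpowers_iff]
      constructor
      · rintro ⟨k, hk⟩
        refine ⟨k, ?_⟩
        have hx' : x = t * a ^ k * t⁻¹ := by
          rw [hk]; group
        rw [hx', key k, ← zpow_natCast a n, ← zpow_mul]
      · rintro ⟨k, hk⟩
        refine ⟨k, ?_⟩
        rw [← hk, ← zpow_natCast a n, ← zpow_mul, ← key k]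
        group
    rw [hsmul]
    constructor
    · rw [hca]
      exact relindex_zpowers_pow a (by omega)
    · have h1 : (Subgroup.closure {a}).relIndex (Subgroup.zpowers (a ^ n)) = 1 :=
        Subgroup.relIndex_eq_one.mpr (by
          rw [hca]
          exact Subgroup.zpowers_le.mpr (pow_mem (Subgroup.mem_zpowers a) n))
      omega
  · intro H' hH' hrel0 hnorm
    have hconj : Subgroup.map (MulAut.conj t).toMonoidHom H' = H' :=
      hnorm t (Subgroup.subset_closure rfl)
    let K : AddSubgroup ℤ :=
      { carrier := {k : ℤ | a ^ k ∈ H'}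
        zero_mem' := by simp [one_mem]
        add_mem' := fun hx hy => by
          simp only [Set.mem_setOf_eq, zpow_add] at *
          exact mul_mem hx hy
        neg_mem' := fun hx => by
          simp only [Set.mem_setOf_eq, zpow_neg] at *
          exact inv_mem hx }
    obtain ⟨g, hgK⟩ := Int.subgroup_cyclic K
    by_cases hg : g = 0
    · have hbot : H' = ⊥ := by
        rw [eq_bot_iff]
        intro x hx
        have hxz : x ∈ Subgroup.zpowers a := hca ▸ hH' hx
        obtain ⟨k, hk⟩ := Subgroup.mem_zpowers_iff.mp hxz
        have hkK : k ∈ K := show a ^ k ∈ H' from hk ▸ hx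
        rw [hgK, hg] at hkK
        rw [AddSubgroup.mem_closure_singleton] at hkK
        obtain ⟨q, hq⟩ := hkK
        simp at hq
        rw [Subgroup.mem_bot, ← hk, ← hq, zpow_zero]
      rw [hbot, Subgroup.relIndex_bot_left, hca, Nat.card_zpowers,
        BS.orderOf_a n hnQ] at hrel0
      exact hrel0 rfl
    · have hgH' : a ^ g ∈ H' := by
        have : g ∈ K := by rw [hgK]; exact AddSubgroup.subset_closure rfl
        exact this
      rw [← hconj] at hgH'
      obtain ⟨x, hxH', hxeq⟩ := Subgroup.mem_map.mp hgH'
      simp only [MulEquiv.toMonoidHom_eq_coe, MonoidHom.coe_coe, MulAut.conj_apply] at hxeq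
      have hxz : x ∈ Subgroup.zpowers a := hca ▸ hH' hxH'
      obtain ⟨j, hj⟩ := Subgroup.mem_zpowers_iff.mp hxz
      have heq : a ^ ((n : ℤ) * j) = a ^ g := by
        rw [← key j, hj, hxeq]
      have hgis : (n : ℤ) * j = g := BS.a_zpow_inj n hnQ heq
      have hjK : j ∈ K := show a ^ j ∈ H' from hj ▸ hxH'
      rw [hgK] at hjK
      obtain ⟨q, hq⟩ := AddSubgroup.mem_closure_singleton.mp hjK
      simp only [smul_eq_mul] at hq
      have h5 : (n : ℤ) * q * g = g := by
        rw [mul_assoc, hq, hgis]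
      have h6 : (n : ℤ) * q = 1 := by
        have := mul_right_cancel₀ hg (by rw [h5, one_mul] : (n:ℤ) * q * g = 1 * g)
        exact this
      have h7 : (n : ℤ) ≤ 1 := Int.le_of_dvd one_pos ⟨q, h6.symm⟩
      omega
end
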